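/- Let S be a finite subset of ℤ^d with S = −S and 0 ∉ S which generates ℤ^d, with word-length ℓ_S. Let σ : ℝ^d → ℝ be a linear functional with σ(s) ≤ 1 for all s ∈ S such that F = {s ∈ S : σ(s) = 1} is nonempty, let z_F = Σ_{s∈F} s and let G_F be the subgroup generated by F. Then for every u ∈ G_F and all y, z ∈ ℤ^d, the limits lim_{n→∞}(ℓ_S(n·z_F + z) − ℓ_S(n·z_F + z − y)) and lim_{n→∞}(ℓ_S(n·z_F + z + u) − ℓ_S(n·z_F + z + u − y)) exist and are equal. (That is, translation by any u ∈ G_F fixes every point of the orbit of the Busemann point b_F under the translation action of ℤ^d on the metric boundary.) -/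
import Mathlib

/-- The word-length of `x ∈ ℤ^d` with respect to a generating set `S`: the least `n ≥ 0`
such that `x` is a sum of `n` (not necessarily distinct) elements of `S`. -/
noncomputable def wordLength {d : ℕ} (S : Finset (Fin d → ℤ)) (x : Fin d → ℤ) : ℕ :=
  sInf {n : ℕ | ∃ g : Fin n → (Fin d → ℤ), (∀ i, g i ∈ S) ∧ ∑ i, g i = x}


namespace WL17

variable {d : ℕ} (S : Finset (Fin d → ℤ))

/-- `x` is representable as a sum of `n` elements of `S`. -/
def Rep (n : ℕ) (x : Fin d → ℤ) : Prop :=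
  ∃ g : Fin n → (Fin d → ℤ), (∀ i, g i ∈ S) ∧ ∑ i, g i = x

lemma rep_zero : Rep S 0 0 := ⟨fun i => i.elim0, fun i => i.elim0, by simp⟩

lemma rep_single {s : Fin d → ℤ} (hs : s ∈ S) : Rep S 1 s :=
  ⟨fun _ => s, fun _ => hs, by simp⟩

lemma rep_add {n m : ℕ} {x y : Fin d → ℤ} (hx : Rep S n x) (hy : Rep S m y) :
    Rep S (n + m) (x + y) := by
  obtain ⟨g, hg, hgs⟩ := hx
  obtain ⟨h, hh, hhs⟩ := hy
  refine ⟨Fin.append g h, ?_, ?_⟩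
  · intro i
    refine Fin.addCases (fun j => ?_) (fun j => ?_) i
    · simpa [Fin.append_left] using hg j
    · simpa [Fin.append_right] using hh j
  · rw [Fin.sum_univ_add]
    simp [Fin.append_left, Fin.append_right, hgs, hhs]

lemma rep_neg (hSsym : ∀ s ∈ S, -s ∈ S) {n : ℕ} {x : Fin d → ℤ} (hx : Rep S n x) :
    Rep S n (-x) := by
  obtain ⟨g, hg, hgs⟩ := hx
  exact ⟨fun i => -g i, fun i => hSsym _ (hg i), by simp [← hgs, Finset.sum_neg_distrib]⟩

lemma rep_exists (hSsym : ∀ s ∈ S, -s ∈ S)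
    (hSgen : AddSubgroup.closure (S : Set (Fin d → ℤ)) = ⊤) (x : Fin d → ℤ) :
    ∃ n, Rep S n x := by
  have hx : x ∈ AddSubgroup.closure (S : Set (Fin d → ℤ)) := by
    rw [hSgen]; trivial
  refine AddSubgroup.closure_induction (p := fun y _ => ∃ n, Rep S n y)
    (fun y hy => ⟨1, rep_single S hy⟩) ⟨0, rep_zero S⟩
    (fun y z _ _ ⟨n, hn⟩ ⟨m, hm⟩ => ⟨n + m, rep_add S hn hm⟩)
    (fun y _ ⟨n, hn⟩ => ⟨n, rep_neg S hSsym hn⟩) hx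

lemma rep_sum (T : Finset (Fin d → ℤ)) (hT : ∀ t ∈ T, t ∈ S) :
    Rep S T.card (∑ t ∈ T, t) := by
  refine ⟨fun i => (T.equivFin.symm i : Fin d → ℤ), fun i => hT _ (T.equivFin.symm i).2, ?_⟩
  rw [show (∑ i : Fin T.card, (T.equivFin.symm i : Fin d → ℤ))
      = ∑ x : {x // x ∈ T}, (x : Fin d → ℤ) from Equiv.sum_comp T.equivFin.symm (fun x : {x // x ∈ T} => (x : Fin d → ℤ))]
  exact Finset.sum_coe_sort T (fun t => t)

lemma wl_le {n : ℕ} {x : Fin d → ℤ} (h : Rep S n x) : wordLength S x ≤ n :=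
  Nat.sInf_le h

lemma wl_rep (hSsym : ∀ s ∈ S, -s ∈ S)
    (hSgen : AddSubgroup.closure (S : Set (Fin d → ℤ)) = ⊤) (x : Fin d → ℤ) :
    Rep S (wordLength S x) x :=
  Nat.sInf_mem (rep_exists S hSsym hSgen x)

end WL17

/-- Proposition 8.6 of Rieffel: translation by any `u ∈ G_F` fixes every point of the
orbit of the Busemann point `b_F` under the translation action of `ℤ^d` on the metric
boundary: for all `y, z ∈ ℤ^d` the limits of `ℓ_S(n·z_F + z) − ℓ_S(n·z_F + z − y)` and
`ℓ_S(n·z_F + z + u) − ℓ_S(n·z_F + z + u − y)` exist and agree. -/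
theorem stmt17 {d : ℕ} (S : Finset (Fin d → ℤ))
    (hSsym : ∀ s ∈ S, -s ∈ S) (hS0 : (0 : Fin d → ℤ) ∉ S)
    (hSgen : AddSubgroup.closure (S : Set (Fin d → ℤ)) = ⊤)
    (σ : (Fin d → ℝ) →ₗ[ℝ] ℝ)
    (hσ : ∀ s ∈ S, σ (fun i => (s i : ℝ)) ≤ 1)
    (F : Finset (Fin d → ℤ))
    (hF : ∀ s : Fin d → ℤ, s ∈ F ↔ s ∈ S ∧ σ (fun i => (s i : ℝ)) = 1)
    (hFne : F.Nonempty)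
    (zF : Fin d → ℤ) (hzF : zF = ∑ s ∈ F, s) :
    ∀ u ∈ AddSubgroup.closure (F : Set (Fin d → ℤ)), ∀ y z : Fin d → ℤ,
      ∃ l : ℝ,
        Filter.Tendsto
          (fun n : ℕ =>
            (wordLength S (n • zF + z) : ℝ) - (wordLength S (n • zF + z - y) : ℝ))
          Filter.atTop (nhds l) ∧
        Filter.Tendsto
          (fun n : ℕ =>
            (wordLength S (n • zF + z + u) : ℝ) -
              (wordLength S (n • zF + z + u - y) : ℝ))
          Filter.atTop (nhds l) := by
  intro u hu y z
  have hFS : ∀ s ∈ F, s ∈ S := fun s hs => ((hF s).1 hs).1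
  have hcard : 1 ≤ F.card := Finset.card_pos.mpr hFne
  set Φ : (Fin d → ℤ) →+ ℝ :=
    σ.toAddMonoidHom.comp ((Int.castAddHom ℝ).compLeft (Fin d)) with hΦ
  have hΦapp : ∀ x : Fin d → ℤ, Φ x = σ (fun i => (x i : ℝ)) := fun x => rfl
  have hsig : ∀ {n : ℕ} {x : Fin d → ℤ}, WL17.Rep S n x → Φ x ≤ (n : ℝ) := by
    rintro n x ⟨g, hg, rfl⟩
    rw [map_sum]
    calc ∑ i, Φ (g i) ≤ ∑ _i : Fin n, (1 : ℝ) :=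
          Finset.sum_le_sum (fun i _ => hσ _ (hg i))
      _ = (n : ℝ) := by simp
  have hΦzF : Φ zF = (F.card : ℝ) := by
    have h1 : ∑ x ∈ F, Φ x = ∑ _x ∈ F, (1 : ℝ) :=
      Finset.sum_congr rfl (fun s hs => ((hF s).1 hs).2)
    rw [hzF, map_sum, h1]
    simp
  set L : (Fin d → ℤ) → ℤ := fun x => (wordLength S x : ℤ) with hL
  set a : (Fin d → ℤ) → ℕ → ℤ :=
    fun w n => L ((n • zF : Fin d → ℤ) + w) - n * F.card with ha
  have hrepzF : WL17.Rep S F.card zF := by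
    rw [hzF]; exact WL17.rep_sum S F hFS
  have hstep : ∀ (w : Fin d → ℤ) (n : ℕ), a w (n + 1) ≤ a w n := by
    intro w n
    have h1 : wordLength S ((n + 1) • zF + w) ≤ wordLength S (n • zF + w) + F.card := by
      have := WL17.wl_le S (WL17.rep_add S (WL17.wl_rep S hSsym hSgen (n • zF + w)) hrepzF)
      rwa [show (n • zF + w) + zF = (n + 1) • zF + w by rw [succ_nsmul]; abel] at this
    simp only [ha, hL]
    push_cast
    push_cast at h1
    linarith
  have hanti : ∀ w, Antitone (a w) := fun w => antitone_nat_of_succ_le (hstep w)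
  have hlb : ∀ (w : Fin d → ℤ) (n : ℕ), ⌈Φ w⌉ ≤ a w n := by
    intro w n
    rw [Int.ceil_le]
    have h1 : Φ (n • zF + w) ≤ (wordLength S (n • zF + w) : ℝ) :=
      hsig (WL17.wl_rep S hSsym hSgen (n • zF + w))
    have h2 : Φ (n • zF + w) = (n : ℝ) * (F.card : ℝ) + Φ w := by
      rw [map_add, map_nsmul, hΦzF, nsmul_eq_mul]
    simp only [ha, hL]
    push_cast
    linarith
  have key : ∀ w : Fin d → ℤ, ∃ c : ℤ, ∃ N : ℕ, ∀ n, N ≤ n → a w n = c := by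
    intro w
    obtain ⟨lb, ⟨N, hN⟩, hleast⟩ := Int.exists_least_of_bdd (P := fun m => ∃ n, a w n = m)
      ⟨⌈Φ w⌉, by rintro m ⟨n, rfl⟩; exact hlb w n⟩ ⟨a w 0, 0, rfl⟩
    exact ⟨lb, N, fun n hn => le_antisymm (hN ▸ hanti w hn) (hleast _ ⟨n, rfl⟩)⟩
  choose c N hc using key
  have hrep_erase : ∀ s ∈ F, WL17.Rep S (F.card - 1) (zF - s) := by
    intro s hs
    have h1 : ∑ t ∈ F.erase s, t = zF - s := by
      rw [hzF]
      exact eq_sub_of_add_eq (Finset.sum_erase_add F (fun t => t) hs)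
    have h2 := WL17.rep_sum S (F.erase s) (fun t ht => hFS t (Finset.mem_of_mem_erase ht))
    rwa [Finset.card_erase_of_mem hs, h1] at h2
  have hshift : ∀ s ∈ F, ∀ w : Fin d → ℤ, c (w + s) = c w + 1 := by
    intro s hs w
    set n := max (N w) (N (w + s)) with hn
    have e1 : a w (n + 1) = c w := hc w (n + 1) (le_trans (le_max_left _ _) (Nat.le_succ n))
    have e2 : a w n = c w := hc w n (le_max_left _ _)
    have e3 : a (w + s) n = c (w + s) := hc (w + s) n (le_max_right _ _)
    have u1 : wordLength S (n • zF + (w + s)) ≤ wordLength S (n • zF + w) + 1 := by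
      have := WL17.wl_le S (WL17.rep_add S (WL17.wl_rep S hSsym hSgen (n • zF + w))
        (WL17.rep_single S (hFS s hs)))
      rwa [show (n • zF + w) + s = n • zF + (w + s) by abel] at this
    have u2 : wordLength S ((n + 1) • zF + w)
        ≤ wordLength S (n • zF + (w + s)) + (F.card - 1) := by
      have := WL17.wl_le S (WL17.rep_add S (WL17.wl_rep S hSsym hSgen (n • zF + (w + s)))
        (hrep_erase s hs))
      rwa [show (n • zF + (w + s)) + (zF - s) = (n + 1) • zF + w by rw [succ_nsmul]; abel]
        at this
    have c1 : a (w + s) n ≤ a w n + 1 := by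
      simp only [ha, hL]
      push_cast at u1 ⊢
      linarith
    have c2 : a w (n + 1) ≤ a (w + s) n - 1 := by
      have u2' : (wordLength S ((n + 1) • zF + w) : ℤ)
          ≤ (wordLength S (n • zF + (w + s)) : ℤ) + ((F.card : ℤ) - 1) := by
        zify [hcard] at u2
        exact u2
      simp only [ha, hL]
      push_cast
      push_cast at u2'
      linarith
    omega
  have hmain : ∃ k : ℤ, ∀ w : Fin d → ℤ, c (w + u) = c w + k := by
    refine AddSubgroup.closure_induction
      (p := fun v _ => ∃ k : ℤ, ∀ w : Fin d → ℤ, c (w + v) = c w + k)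
      (fun v hv => ⟨1, fun w => hshift v hv w⟩)
      ⟨0, fun w => by simp⟩
      (fun v v' _ _ h1 h2 => ?_) (fun v _ h1 => ?_) hu
    · obtain ⟨k1, h1⟩ := h1
      obtain ⟨k2, h2⟩ := h2
      exact ⟨k1 + k2, fun w => by
        rw [show w + (v + v') = (w + v) + v' by abel, h2, h1]; ring⟩
    · obtain ⟨k, h⟩ := h1
      refine ⟨-k, fun w => ?_⟩
      have := h (w + -v)
      rw [show (w + -v) + v = w by abel] at this
      omega
  obtain ⟨k, hk⟩ := hmain
  refine ⟨((c z - c (z - y) : ℤ) : ℝ), ?_, ?_⟩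
  · have hev : ∀ᶠ n : ℕ in Filter.atTop,
        ((c z - c (z - y) : ℤ) : ℝ) =
          (wordLength S (n • zF + z) : ℝ) - (wordLength S (n • zF + z - y) : ℝ) := by
      filter_upwards [Filter.eventually_ge_atTop (max (N z) (N (z - y)))] with n hn
      have e1 := hc z n (le_trans (le_max_left _ _) hn)
      have e2 := hc (z - y) n (le_trans (le_max_right _ _) hn)
      simp only [ha, hL] at e1 e2
      rw [show n • zF + z - y = n • zF + (z - y) by abel]
      have e3 : c z - c (z - y)
          = (wordLength S (n • zF + z) : ℤ) - (wordLength S (n • zF + (z - y)) : ℤ) := by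
        omega
      rw [e3]
      push_cast
      ring
    exact Filter.Tendsto.congr' hev tendsto_const_nhds
  · have hval : c (z + u) - c (z + u - y) = c z - c (z - y) := by
      have h1 := hk z
      have h2 := hk (z - y)
      rw [show z + u - y = (z - y) + u by abel]
      omega
    have hev : ∀ᶠ n : ℕ in Filter.atTop,
        ((c z - c (z - y) : ℤ) : ℝ) =
          (wordLength S (n • zF + z + u) : ℝ) - (wordLength S (n • zF + z + u - y) : ℝ) := by
      filter_upwards [Filter.eventually_ge_atTop (max (N (z + u)) (N (z + u - y)))] with n hn
      have e1 := hc (z + u) n (le_trans (le_max_left _ _) hn)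
      have e2 := hc (z + u - y) n (le_trans (le_max_right _ _) hn)
      simp only [ha, hL] at e1 e2
      rw [show n • zF + z + u = n • zF + (z + u) by abel,
        show n • zF + (z + u) - y = n • zF + (z + u - y) by abel]
      have e3 : c z - c (z - y)
          = (wordLength S (n • zF + (z + u)) : ℤ)
            - (wordLength S (n • zF + (z + u - y)) : ℤ) := by
        omega
      rw [e3]
      push_cast
      ring
    exact Filter.Tendsto.congr' hev tendsto_const_nhds
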